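/- Suppose n is even and let w in W(affine A_{n-1}) be an alternating product of I_0 and I_1 of length k (i.e., w = I_{i} I_{1−i} ⋯ with k factors). Then ℓ(w) = k·(n/2), and the starting factor index i and ending factor index are determined by L(w) and R(w) respectively. -/

import Mathlib

open Polynomial

/-- Bruhat order on a Coxeter group, via the subword property: `x ≤ w` iff some
reduced word for `w` has a subword whose product is `x`. -/
def BruhatLE {B W : Type*} {M : CoxeterMatrix B} [Group W] (cs : CoxeterSystem M W)
    (x w : W) : Prop :=
  ∃ ω : List B, cs.IsReduced ω ∧ cs.wordProd ω = w ∧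
    ∃ ω' : List B, ω'.Sublist ω ∧ cs.wordProd ω' = x

/-- Strict Bruhat order. -/
def BruhatLT {B W : Type*} {M : CoxeterMatrix B} [Group W] (cs : CoxeterSystem M W)
    (x w : W) : Prop :=
  BruhatLE cs x w ∧ x ≠ w

/-- `w` is fully commutative (Stembridge): no reduced expression for `w` contains a
factor `s t s` with `s, t` noncommuting generators with `m(s,t) = 3`. -/
def FullyCommutative {B W : Type*} {M : CoxeterMatrix B} [Group W] (cs : CoxeterSystem M W)
    (w : W) : Prop :=
  ∀ ω : List B, cs.IsReduced ω → cs.wordProd ω = w →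
    ¬ ∃ (l₁ l₂ : List B) (i j : B), M i j = 3 ∧ ω = l₁ ++ [i, j, i] ++ l₂
/-- `M` is the Coxeter matrix of type affine `A_{n-1}`, with generators indexed by
`ZMod n`: `m(i,i) = 1`, `m(i,j) = 3` if `i - j ≡ ±1 (mod n)`, and `m(i,j) = 2`
otherwise. -/
def IsAffineAMatrix (n : ℕ) (M : CoxeterMatrix (ZMod n)) : Prop :=
  ∀ i j : ZMod n, M i j = if i = j then 1 else if i = j + 1 ∨ j = i + 1 then 3 else 2
/-- The set `S_0` (for `b = false`) resp. `S_1` (for `b = true`) of generators of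
even resp. odd index in type affine `A_{n-1}`. -/
def parityGenSet (n : ℕ) (b : Bool) : Set (ZMod n) :=
  {i : ZMod n | ∃ k : ℕ, k < n ∧ k % 2 = b.toNat ∧ (k : ZMod n) = i}

/-- The element `I_0` (for `b = false`) resp. `I_1` (for `b = true`): the product of
the pairwise commuting generators of even resp. odd index. -/
def Iprod {n : ℕ} {W : Type*} {M : CoxeterMatrix (ZMod n)} [Group W]
    (cs : CoxeterSystem M W) (b : Bool) : W :=
  cs.wordProd (((List.range n).filter (fun k => k % 2 = b.toNat)).map (Nat.cast))

/-- The alternating product `I_b I_{!b} I_b ⋯` with `k` factors. -/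
def altProd {n : ℕ} {W : Type*} {M : CoxeterMatrix (ZMod n)} [Group W]
    (cs : CoxeterSystem M W) : Bool → ℕ → W
  | _, 0 => 1
  | b, k + 1 => Iprod cs b * altProd cs (!b) k

set_option linter.unusedSectionVars false
set_option linter.unreachableTactic false
set_option linter.unusedTactic false
set_option linter.unusedVariables false
set_option maxHeartbeats 1000000

namespace AffA


variable {n : ℕ}

def afun (n : ℕ) (i : ZMod n) (x : ℤ) : ℤ :=
  if (x : ZMod n) = i then x + 1 else if (x : ZMod n) = i + 1 then x - 1 else x

lemma cast_add_one (x : ℤ) : ((x + 1 : ℤ) : ZMod n) = (x : ZMod n) + 1 := by push_cast; ring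
lemma cast_sub_one (x : ℤ) : ((x - 1 : ℤ) : ZMod n) = (x : ZMod n) - 1 := by push_cast; ring

section basic
variable (h1 : (1 : ZMod n) ≠ 0)
include h1

lemma afun_self {i : ZMod n} {x : ℤ} (h : (x : ZMod n) = i) : afun n i x = x + 1 := if_pos h

lemma afun_next {i : ZMod n} {x : ℤ} (h : (x : ZMod n) = i + 1) : afun n i x = x - 1 := by
  rw [afun, if_neg, if_pos h]
  rw [h]; intro hc; exact h1 (by linear_combination hc)

lemma afun_other {i : ZMod n} {x : ℤ} (ha : (x : ZMod n) ≠ i) (hb : (x : ZMod n) ≠ i + 1) :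
    afun n i x = x := by rw [afun, if_neg ha, if_neg hb]

lemma afun_invol (i : ZMod n) (x : ℤ) : afun n i (afun n i x) = x := by
  by_cases ha : (x : ZMod n) = i
  · rw [afun_self h1 ha, afun_next h1 (by rw [cast_add_one, ha]), add_sub_cancel_right]
  · by_cases hb : (x : ZMod n) = i + 1
    · rw [afun_next h1 hb, afun_self h1 (by rw [cast_sub_one, hb]; try ring), sub_add_cancel]
    · rw [afun_other h1 ha hb, afun_other h1 ha hb]

end basic

def aperm (h1 : (1 : ZMod n) ≠ 0) (i : ZMod n) : Equiv.Perm ℤ :=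
  Function.Involutive.toPerm (afun n i) (afun_invol h1 i)

@[simp] lemma aperm_apply (h1 : (1 : ZMod n) ≠ 0) (i : ZMod n) (x : ℤ) :
    aperm h1 i x = afun n i x := rfl




section rel

variable (h1 : (1 : ZMod n) ≠ 0) (h2 : (2 : ZMod n) ≠ 0)

lemma aperm_sq (i : ZMod n) : (aperm h1 i) ^ 2 = 1 := by
  ext x
  simp only [pow_succ, pow_zero, one_mul, Equiv.Perm.mul_apply, Equiv.Perm.one_apply, aperm_apply]
  exact afun_invol h1 i x

include h1 h2 in
lemma aperm_braid (i : ZMod n) : (aperm h1 i * aperm h1 (i + 1)) ^ 3 = 1 := by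
  ext x
  simp only [pow_succ, pow_zero, one_mul, Equiv.Perm.mul_apply, Equiv.Perm.one_apply, aperm_apply]
  by_cases ha : (x : ZMod n) = i
  · rw [afun_other (x := x) h1 (by simp only [cast_add_one, cast_sub_one, ha]; intro hd; first | exact h1 (by linear_combination hd) | exact h1 (by linear_combination -hd) | exact h2 (by linear_combination hd) | exact h2 (by linear_combination -hd)) (by simp only [cast_add_one, cast_sub_one, ha]; intro hd; first | exact h1 (by linear_combination hd) | exact h1 (by linear_combination -hd) | exact h2 (by linear_combination hd) | exact h2 (by linear_combination -hd)),
        afun_self (x := x) h1 (by simp only [cast_add_one, cast_sub_one, ha]; try ring),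
        afun_self (x := x + 1) h1 (by simp only [cast_add_one, cast_sub_one, ha]; try ring),
        afun_other (x := x + 1 + 1) h1 (by simp only [cast_add_one, cast_sub_one, ha]; intro hd; first | exact h1 (by linear_combination hd) | exact h1 (by linear_combination -hd) | exact h2 (by linear_combination hd) | exact h2 (by linear_combination -hd)) (by simp only [cast_add_one, cast_sub_one, ha]; intro hd; first | exact h1 (by linear_combination hd) | exact h1 (by linear_combination -hd) | exact h2 (by linear_combination hd) | exact h2 (by linear_combination -hd)),
        afun_next (x := x + 1 + 1) h1 (by simp only [cast_add_one, cast_sub_one, ha]; try ring),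
        afun_next (x := x + 1 + 1 - 1) h1 (by simp only [cast_add_one, cast_sub_one, ha]; try ring)]
    ring
  · by_cases hb : (x : ZMod n) = i + 1
    · rw [afun_self (x := x) h1 (by simp only [cast_add_one, cast_sub_one, hb]; try ring),
          afun_other (x := x + 1) h1 (by simp only [cast_add_one, cast_sub_one, hb]; intro hd; first | exact h1 (by linear_combination hd) | exact h1 (by linear_combination -hd) | exact h2 (by linear_combination hd) | exact h2 (by linear_combination -hd)) (by simp only [cast_add_one, cast_sub_one, hb]; intro hd; first | exact h1 (by linear_combination hd) | exact h1 (by linear_combination -hd) | exact h2 (by linear_combination hd) | exact h2 (by linear_combination -hd)),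
          afun_next (x := x + 1) h1 (by simp only [cast_add_one, cast_sub_one, hb]; try ring),
          afun_next (x := x + 1 - 1) h1 (by simp only [cast_add_one, cast_sub_one, hb]; try ring),
          afun_other (x := x + 1 - 1 - 1) h1 (by simp only [cast_add_one, cast_sub_one, hb]; intro hd; first | exact h1 (by linear_combination hd) | exact h1 (by linear_combination -hd) | exact h2 (by linear_combination hd) | exact h2 (by linear_combination -hd)) (by simp only [cast_add_one, cast_sub_one, hb]; intro hd; first | exact h1 (by linear_combination hd) | exact h1 (by linear_combination -hd) | exact h2 (by linear_combination hd) | exact h2 (by linear_combination -hd)),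
          afun_self (x := x + 1 - 1 - 1) h1 (by simp only [cast_add_one, cast_sub_one, hb]; try ring)]
      ring
    · by_cases hc : (x : ZMod n) = i + 1 + 1
      · rw [afun_next (x := x) h1 (by simp only [cast_add_one, cast_sub_one, hc]; try ring),
            afun_next (x := x - 1) h1 (by simp only [cast_add_one, cast_sub_one, hc]; try ring),
            afun_other (x := x - 1 - 1) h1 (by simp only [cast_add_one, cast_sub_one, hc]; intro hd; first | exact h1 (by linear_combination hd) | exact h1 (by linear_combination -hd) | exact h2 (by linear_combination hd) | exact h2 (by linear_combination -hd)) (by simp only [cast_add_one, cast_sub_one, hc]; intro hd; first | exact h1 (by linear_combination hd) | exact h1 (by linear_combination -hd) | exact h2 (by linear_combination hd) | exact h2 (by linear_combination -hd)),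
            afun_self (x := x - 1 - 1) h1 (by simp only [cast_add_one, cast_sub_one, hc]; try ring),
            afun_self (x := x - 1 - 1 + 1) h1 (by simp only [cast_add_one, cast_sub_one, hc]; try ring),
            afun_other (x := x - 1 - 1 + 1 + 1) h1 (by simp only [cast_add_one, cast_sub_one, hc]; intro hd; first | exact h1 (by linear_combination hd) | exact h1 (by linear_combination -hd) | exact h2 (by linear_combination hd) | exact h2 (by linear_combination -hd)) (by simp only [cast_add_one, cast_sub_one, hc]; intro hd; first | exact h1 (by linear_combination hd) | exact h1 (by linear_combination -hd) | exact h2 (by linear_combination hd) | exact h2 (by linear_combination -hd))]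
        ring
      · rw [afun_other (x := x) h1 hb hc, afun_other (x := x) h1 ha hb,
          afun_other (x := x) h1 hb hc, afun_other (x := x) h1 ha hb,
          afun_other (x := x) h1 hb hc, afun_other (x := x) h1 ha hb]

include h1 in
lemma aperm_comm {i j : ZMod n} (hij : i ≠ j) (hha : i ≠ j + 1) (hhb : j ≠ i + 1) :
    (aperm h1 i * aperm h1 j) ^ 2 = 1 := by
  ext x
  simp only [pow_succ, pow_zero, one_mul, Equiv.Perm.mul_apply, Equiv.Perm.one_apply, aperm_apply]
  by_cases c1 : (x : ZMod n) = i
  · rw [afun_other (x := x) h1 (by simp only [cast_add_one, cast_sub_one, c1]; intro hd; first | exact h1 (by linear_combination hd) | exact h1 (by linear_combination -hd) | exact hij (by linear_combination hd) | exact hij (by linear_combination -hd) | exact hha (by linear_combination hd) | exact hha (by linear_combination -hd) | exact hhb (by linear_combination hd) | exact hhb (by linear_combination -hd)) (by simp only [cast_add_one, cast_sub_one, c1]; intro hd; first | exact h1 (by linear_combination hd) | exact h1 (by linear_combination -hd) | exact hij (by linear_combination hd) | exact hij (by linear_combination -hd) | exact hha (by linear_combination hd) | exact hha (by linear_combination -hd)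 | exact hhb (by linear_combination hd) | exact hhb (by linear_combination -hd)),
        afun_self (x := x) h1 (by simp only [cast_add_one, cast_sub_one, c1]; try ring),
        afun_other (x := x + 1) h1 (by simp only [cast_add_one, cast_sub_one, c1]; intro hd; first | exact h1 (by linear_combination hd) | exact h1 (by linear_combination -hd) | exact hij (by linear_combination hd) | exact hij (by linear_combination -hd) | exact hha (by linear_combination hd) | exact hha (by linear_combination -hd) | exact hhb (by linear_combination hd) | exact hhb (by linear_combination -hd)) (by simp only [cast_add_one, cast_sub_one, c1]; intro hd; first | exact h1 (by linear_combination hd) | exact h1 (by linear_combination -hd) | exact hij (by linear_combination hd) | exact hij (by linear_combination -hd) | exact hha (by linear_combination hd) | exact hha (by linear_combination -hd) | exact hhb (by linear_combination hd) | exact hhb (by linear_combination -hd)),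
        afun_next (x := x + 1) h1 (by simp only [cast_add_one, cast_sub_one, c1]; try ring)]
    ring
  · by_cases c2 : (x : ZMod n) = i + 1
    · rw [afun_other (x := x) h1 (by simp only [cast_add_one, cast_sub_one, c2]; intro hd; first | exact h1 (by linear_combination hd) | exact h1 (by linear_combination -hd) | exact hij (by linear_combination hd) | exact hij (by linear_combination -hd) | exact hha (by linear_combination hd) | exact hha (by linear_combination -hd) | exact hhb (by linear_combination hd) | exact hhb (by linear_combination -hd)) (by simp only [cast_add_one, cast_sub_one, c2]; intro hd; first | exact h1 (by linear_combination hd) | exact h1 (by linear_combination -hd) | exact hij (by linear_combination hd) | exact hij (by linear_combination -hd) | exact hha (by linear_combination hd) | exact hha (by linear_combination -hd) | exact hhb (by linear_combination hd) | exact hhb (by linear_combination -hd)),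
          afun_next (x := x) h1 (by simp only [cast_add_one, cast_sub_one, c2]; try ring),
          afun_other (x := x - 1) h1 (by simp only [cast_add_one, cast_sub_one, c2]; intro hd; first | exact h1 (by linear_combination hd) | exact h1 (by linear_combination -hd) | exact hij (by linear_combination hd) | exact hij (by linear_combination -hd) | exact hha (by linear_combination hd) | exact hha (by linear_combination -hd) | exact hhb (by linear_combination hd) | exact hhb (by linear_combination -hd)) (by simp only [cast_add_one, cast_sub_one, c2]; intro hd; first | exact h1 (by linear_combination hd) | exact h1 (by linear_combination -hd) | exact hij (by linear_combination hd) | exact hij (by linear_combination -hd) | exact hha (by linear_combination hd) | exact hha (by linear_combination -hd) | exact hhb (by linear_combination hd) | exact hhb (by linear_combination -hd)),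
          afun_self (x := x - 1) h1 (by simp only [cast_add_one, cast_sub_one, c2]; try ring)]
      ring
    · by_cases c3 : (x : ZMod n) = j
      · rw [afun_self (x := x) h1 (by simp only [cast_add_one, cast_sub_one, c3]; try ring),
            afun_other (x := x + 1) h1 (by simp only [cast_add_one, cast_sub_one, c3]; intro hd; first | exact h1 (by linear_combination hd) | exact h1 (by linear_combination -hd) | exact hij (by linear_combination hd) | exact hij (by linear_combination -hd) | exact hha (by linear_combination hd) | exact hha (by linear_combination -hd) | exact hhb (by linear_combination hd) | exact hhb (by linear_combination -hd)) (by simp only [cast_add_one, cast_sub_one, c3]; intro hd; first | exact h1 (by linear_combination hd) | exact h1 (by linear_combination -hd) | exact hij (by linear_combination hd) | exact hij (by linear_combination -hd) | exact hha (by linear_combination hd) | exact hha (by linear_combination -hd) | exact hhb (by linear_combination hd) | exact hhb (by linear_combination -hd)),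
            afun_next (x := x + 1) h1 (by simp only [cast_add_one, cast_sub_one, c3]; try ring),
            afun_other (x := x + 1 - 1) h1 (by simp only [cast_add_one, cast_sub_one, c3]; intro hd; first | exact h1 (by linear_combination hd) | exact h1 (by linear_combination -hd) | exact hij (by linear_combination hd) | exact hij (by linear_combination -hd) | exact hha (by linear_combination hd) | exact hha (by linear_combination -hd) | exact hhb (by linear_combination hd) | exact hhb (by linear_combination -hd)) (by simp only [cast_add_one, cast_sub_one, c3]; intro hd; first | exact h1 (by linear_combination hd) | exact h1 (by linear_combination -hd) | exact hij (by linear_combination hd) | exact hij (by linear_combination -hd) | exact hha (by linear_combination hd) | exact hha (by linear_combination -hd) | exact hhb (by linear_combination hd) | exact hhb (by linear_combination -hd))]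
        ring
      · by_cases c4 : (x : ZMod n) = j + 1
        · rw [afun_next (x := x) h1 (by simp only [cast_add_one, cast_sub_one, c4]; try ring),
              afun_other (x := x - 1) h1 (by simp only [cast_add_one, cast_sub_one, c4]; intro hd; first | exact h1 (by linear_combination hd) | exact h1 (by linear_combination -hd) | exact hij (by linear_combination hd) | exact hij (by linear_combination -hd) | exact hha (by linear_combination hd) | exact hha (by linear_combination -hd) | exact hhb (by linear_combination hd) | exact hhb (by linear_combination -hd)) (by simp only [cast_add_one, cast_sub_one, c4]; intro hd; first | exact h1 (by linear_combination hd) | exact h1 (by linear_combination -hd) | exact hij (by linear_combination hd) | exact hij (by linear_combination -hd) | exact hha (by linear_combination hd) | exact hha (by linear_combination -hd) | exact hhb (by linear_combination hd) | exact hhb (by linear_combination -hd)),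
              afun_self (x := x - 1) h1 (by simp only [cast_add_one, cast_sub_one, c4]; try ring),
              afun_other (x := x - 1 + 1) h1 (by simp only [cast_add_one, cast_sub_one, c4]; intro hd; first | exact h1 (by linear_combination hd) | exact h1 (by linear_combination -hd) | exact hij (by linear_combination hd) | exact hij (by linear_combination -hd) | exact hha (by linear_combination hd) | exact hha (by linear_combination -hd) | exact hhb (by linear_combination hd) | exact hhb (by linear_combination -hd)) (by simp only [cast_add_one, cast_sub_one, c4]; intro hd; first | exact h1 (by linear_combination hd) | exact h1 (by linear_combination -hd) | exact hij (by linear_combination hd) | exact hij (by linear_combination -hd) | exact hha (by linear_combination hd) | exact hha (by linear_combination -hd) | exact hhb (by linear_combination hd) | exact hhb (by linear_combination -hd))]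
          ring
        · rw [afun_other (x := x) h1 c3 c4, afun_other (x := x) h1 c1 c2,
            afun_other (x := x) h1 c3 c4, afun_other (x := x) h1 c1 c2]

end rel


variable {n : ℕ}

/-- periodicity -/
def IsPer (n : ℕ) (g : Equiv.Perm ℤ) : Prop := ∀ x : ℤ, g (x + n) = g x + n

/-- displacement -/
def disp (n : ℕ) (g : Equiv.Perm ℤ) : ℤ := ∑ r ∈ Finset.range n, |g (r : ℤ) - (r : ℤ)|

lemma isPer_one : IsPer n 1 := fun x => rfl

lemma isPer_mul {g h : Equiv.Perm ℤ} (hg : IsPer n g) (hh : IsPer n h) : IsPer n (g * h) := by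
  intro x
  simp only [Equiv.Perm.mul_apply, hh x, hg (h x)]

lemma IsPer.zsmul {g : Equiv.Perm ℤ} (hg : IsPer n g) (m : ℤ) (x : ℤ) :
    g (x + m * n) = g x + m * n := by
  induction m using Int.induction_on with
  | zero => simp
  | succ i ih =>
      have : x + (i + 1) * n = (x + i * n) + n := by ring
      rw [this, hg, ih]; ring
  | pred i ih =>
      have h2 := hg (x + (-(i:ℤ) - 1) * n)
      have e : x + (-(i:ℤ) - 1) * n + n = x + (-(i : ℤ)) * n := by ring
      rw [e, ih] at h2
      omega

lemma res_inj {g : Equiv.Perm ℤ} (hg : IsPer n g) {x y : ℤ}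
    (h : ((g x : ZMod n)) = ((g y : ZMod n))) : (x : ZMod n) = (y : ZMod n) := by
  rw [ZMod.intCast_eq_intCast_iff] at h ⊢
  obtain ⟨m, hm⟩ := (h : g x ≡ g y [ZMOD (n:ℤ)]).dvd
  have : g (x + m * n) = g y := by rw [hg.zsmul m x]; linarith [hm]
  have hxy : x + m * n = y := g.injective this
  exact Int.modEq_iff_dvd.mpr ⟨m, by rw [← hxy]; ring⟩


variable {n : ℕ}



/-- at most one residue goes to class c -/
lemma card_res_le [NeZero n] {g : Equiv.Perm ℤ} (hg : IsPer n g) (c : ZMod n) :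
    ((Finset.range n).filter (fun r : ℕ => ((g (r : ℤ) : ZMod n)) = c)).card ≤ 1 := by
  rw [Finset.card_le_one]
  intro a ha b hb
  simp only [Finset.mem_filter, Finset.mem_range] at ha hb
  have h := res_inj hg (ha.2.trans hb.2.symm)
  have h2 : ((a : ℕ) : ZMod n) = ((b : ℕ) : ZMod n) := by push_cast at h ⊢; exact h
  have := congrArg ZMod.val h2
  rwa [ZMod.val_cast_of_lt ha.1, ZMod.val_cast_of_lt hb.1] at this

lemma sum_indicator_le [NeZero n] {g : Equiv.Perm ℤ} (hg : IsPer n g) (c : ZMod n) :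
    (∑ r ∈ Finset.range n, (if ((g (r : ℤ) : ZMod n)) = c then (1 : ℤ) else 0)) ≤ 1 := by
  rw [Finset.sum_boole]
  exact_mod_cast card_res_le hg c

lemma disp_step [NeZero n] (h1 : (1 : ZMod n) ≠ 0) {g : Equiv.Perm ℤ} (hg : IsPer n g)
    (i : ZMod n)
    (ap : Equiv.Perm ℤ) (hap : ∀ x, ap x = afun n i x) :
    disp n (ap * g) ≤ disp n g + 2 := by
  have key : ∀ r : ℕ, |(ap * g) (r:ℤ) - (r:ℤ)| ≤ |g (r:ℤ) - (r:ℤ)|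
      + (if ((g (r:ℤ) : ZMod n)) = i then (1:ℤ) else 0)
      + (if ((g (r:ℤ) : ZMod n)) = i + 1 then (1:ℤ) else 0) := by
    intro r
    have habs1 : |(g (r:ℤ) - (r:ℤ)) + 1| ≤ |g (r:ℤ) - (r:ℤ)| + 1 :=
      (abs_add_le _ 1).trans (by simp)
    have habs2 : |(g (r:ℤ) - (r:ℤ)) - 1| ≤ |g (r:ℤ) - (r:ℤ)| + 1 := by
      rw [show g (r:ℤ) - (r:ℤ) - 1 = (g (r:ℤ) - (r:ℤ)) + (-1) from by ring]
      exact (abs_add_le _ (-1)).trans (by simp)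
    rw [Equiv.Perm.mul_apply, hap, afun]
    split_ifs with c1 c2 c2 <;>
      [(rw [show g (r:ℤ) + 1 - (r:ℤ) = (g (r:ℤ) - (r:ℤ)) + 1 from by ring]; linarith);
       (rw [show g (r:ℤ) + 1 - (r:ℤ) = (g (r:ℤ) - (r:ℤ)) + 1 from by ring]; linarith);
       (rw [show g (r:ℤ) - 1 - (r:ℤ) = (g (r:ℤ) - (r:ℤ)) - 1 from by ring]; linarith);
       linarith]
  calc disp n (ap * g) ≤ ∑ r ∈ Finset.range n, (|g (r:ℤ) - (r:ℤ)|
      + (if ((g (r:ℤ) : ZMod n)) = i then (1:ℤ) else 0)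
      + (if ((g (r:ℤ) : ZMod n)) = i + 1 then (1:ℤ) else 0)) := Finset.sum_le_sum fun r _ => key r
    _ = disp n g + (∑ r ∈ Finset.range n, (if ((g (r:ℤ) : ZMod n)) = i then (1:ℤ) else 0))
        + (∑ r ∈ Finset.range n, (if ((g (r:ℤ) : ZMod n)) = i + 1 then (1:ℤ) else 0)) := by
        rw [disp]; rw [← Finset.sum_add_distrib, ← Finset.sum_add_distrib]
    _ ≤ disp n g + 1 + 1 := by
        have i1 := sum_indicator_le hg i (n := n)
        have i2 := sum_indicator_le hg (i + 1) (n := n)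
        linarith
    _ ≤ disp n g + 2 := by linarith

section cox

variable {W : Type*} [Group W] {M : CoxeterMatrix (ZMod n)} (cs : CoxeterSystem M W)
variable (h1 : (1 : ZMod n) ≠ 0)
variable (φ : W →* Equiv.Perm ℤ) (hs : ∀ i, φ (cs.simple i) = aperm h1 i)

lemma isPer_aperm (i : ZMod n) : IsPer n (aperm h1 i) := by
  intro x
  have hc : (Int.cast (x + (n:ℤ)) : ZMod n) = (Int.cast x : ZMod n) := by push_cast; simp
  simp only [aperm_apply, afun, hc]
  split_ifs <;> ring

include hs in
lemma isPer_phi (w : W) : IsPer n (φ w) := by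
  induction w using cs.simple_induction with
  | simple i => rw [hs]; exact isPer_aperm h1 i
  | one => rw [map_one]; exact isPer_one
  | mul w1 w2 hw1 hw2 => rw [map_mul]; exact isPer_mul hw1 hw2

include hs in
lemma disp_word [NeZero n] (ω : List (ZMod n)) :
    disp n (φ (cs.wordProd ω)) ≤ 2 * ω.length := by
  induction ω with
  | nil =>
      simp only [CoxeterSystem.wordProd_nil, map_one, List.length_nil]
      have : disp n (1 : Equiv.Perm ℤ) = 0 := by
        simp [disp]
      rw [this]; norm_num
  | cons i ω ih =>
      rw [cs.wordProd_cons, map_mul, hs]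
      have hstep := disp_step (n := n) h1 (isPer_phi cs h1 φ hs (cs.wordProd ω)) i
        (aperm h1 i) (fun x => rfl)
      have : ((i :: ω).length : ℤ) = (ω.length : ℤ) + 1 := by simp
      push_cast [List.length_cons]
      push_cast at ih
      linarith

include hs in
lemma disp_le_len [NeZero n] (w : W) : disp n (φ w) ≤ 2 * cs.length w := by
  obtain ⟨ω, hlen, hw⟩ := cs.exists_reduced_word w
  have h := disp_word cs h1 φ hs ω
  rw [← hlen.eq] at h
  rwa [← hw] at h

include hs in
lemma F_cons (m : ℕ) (l : List ℕ) (x : ℤ) :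
    φ (cs.wordProd ((m :: l).map (Nat.cast : ℕ → ZMod n))) x
      = afun n (m : ZMod n) (φ (cs.wordProd (l.map Nat.cast)) x) := by
  rw [List.map_cons, cs.wordProd_cons, map_mul, hs, Equiv.Perm.mul_apply, aperm_apply]

lemma mod2_of_cast_eq (hev : (2:ℤ) ∣ (n:ℤ)) {y z : ℤ} (h : (y : ZMod n) = z) :
    y % 2 = z % 2 := by
  rw [ZMod.intCast_eq_intCast_iff] at h
  have hd : (2:ℤ) ∣ z - y := dvd_trans hev h.dvd
  obtain ⟨c, hc⟩ := hd
  omega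

lemma cast_val [NeZero n] (a : ZMod n) : ((a.val : ℕ) : ZMod n) = a :=
  (ZMod.natCast_val a).trans (by simp)

include hs in
lemma F_fix (l : List ℕ) (x : ℤ)
    (hfix : ∀ m ∈ l, (x : ZMod n) ≠ (m : ZMod n) ∧ (x : ZMod n) ≠ (m : ZMod n) + 1) :
    φ (cs.wordProd (l.map (Nat.cast : ℕ → ZMod n))) x = x := by
  induction l with
  | nil => simp [CoxeterSystem.wordProd_nil]
  | cons m l ih =>
      rw [F_cons cs h1 φ hs, ih (fun m' hm' => hfix m' (List.mem_cons_of_mem _ hm'))]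
      exact afun_other h1 (hfix m (List.mem_cons_self)).1 (hfix m (List.mem_cons_self)).2

include hs in
lemma F_up (hev : (2:ℤ) ∣ (n:ℤ)) (t : ℕ) (l : List ℕ) (hl : ∀ m ∈ l, m < n ∧ m % 2 = t)
    (hnd : l.Nodup) (x : ℤ) (m₀ : ℕ) (hm₀ : m₀ ∈ l) (hx : (x : ZMod n) = (m₀ : ZMod n)) :
    φ (cs.wordProd (l.map (Nat.cast : ℕ → ZMod n))) x = x + 1 := by
  induction l with
  | nil => exact absurd hm₀ List.not_mem_nil
  | cons m l ih =>
      have hp : x % 2 = ((m₀ : ℤ)) % 2 := mod2_of_cast_eq hev (by push_cast at hx ⊢; exact hx)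
      have hpt : x % 2 = (t : ℤ) % 2 := by
        have := (hl m₀ hm₀).2; omega
      by_cases hxm : (x : ZMod n) = (m : ZMod n)
      · rw [F_cons cs h1 φ hs, F_fix cs h1 φ hs, afun_self h1 hxm]
        intro m' hm'
        constructor
        · intro hc
          have hmm : (m : ZMod n) = (m' : ZMod n) := hxm.symm.trans hc
          have hval := congrArg ZMod.val hmm
          rw [ZMod.val_cast_of_lt (hl m (List.mem_cons_self)).1,
            ZMod.val_cast_of_lt (hl m' (List.mem_cons_of_mem _ hm')).1] at hval
          exact (List.nodup_cons.mp hnd).1 (hval ▸ hm')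
        · intro hc
          have h2 : x % 2 = ((m' : ℤ) + 1) % 2 := mod2_of_cast_eq hev (by push_cast at hc ⊢; exact hc)
          have := (hl m' (List.mem_cons_of_mem _ hm')).2
          have := (hl m (List.mem_cons_self)).2
          omega
      · have hm₀l : m₀ ∈ l := by
          rcases List.mem_cons.mp hm₀ with rfl | h
          · exact absurd hx hxm
          · exact h
        rw [F_cons cs h1 φ hs,
          ih (fun m' hm' => hl m' (List.mem_cons_of_mem _ hm')) (List.nodup_cons.mp hnd).2 hm₀l]
        refine afun_other h1 ?_ ?_
        · intro hc
          have h2 : (x + 1) % 2 = ((m : ℤ)) % 2 := mod2_of_cast_eq hev (by push_cast at hc ⊢; exact hc)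
          have := (hl m (List.mem_cons_self)).2
          omega
        · intro hc
          rw [cast_add_one] at hc
          exact hxm (by linear_combination hc)

include hs in
lemma F_down (hev : (2:ℤ) ∣ (n:ℤ)) (t : ℕ) (l : List ℕ) (hl : ∀ m ∈ l, m < n ∧ m % 2 = t)
    (hnd : l.Nodup) (x : ℤ) (m₀ : ℕ) (hm₀ : m₀ ∈ l) (hx : (x : ZMod n) = (m₀ : ZMod n) + 1) :
    φ (cs.wordProd (l.map (Nat.cast : ℕ → ZMod n))) x = x - 1 := by
  induction l with
  | nil => exact absurd hm₀ List.not_mem_nil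
  | cons m l ih =>
      have hp : x % 2 = ((m₀ : ℤ) + 1) % 2 := mod2_of_cast_eq hev (by push_cast at hx ⊢; exact hx)
      have hpt : x % 2 = ((t : ℤ) + 1) % 2 := by
        have := (hl m₀ hm₀).2; omega
      by_cases hxm : (x : ZMod n) = (m : ZMod n) + 1
      · rw [F_cons cs h1 φ hs, F_fix cs h1 φ hs, afun_next h1 hxm]
        intro m' hm'
        constructor
        · intro hc
          have h2 : x % 2 = ((m' : ℤ)) % 2 := mod2_of_cast_eq hev (by push_cast at hc ⊢; exact hc)
          have := (hl m' (List.mem_cons_of_mem _ hm')).2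
          omega
        · intro hc
          have hmm : (m : ZMod n) = (m' : ZMod n) := by
            have := hxm.symm.trans hc
            linear_combination this
          have hv := congrArg ZMod.val hmm
          rw [ZMod.val_cast_of_lt (hl m (List.mem_cons_self)).1,
            ZMod.val_cast_of_lt (hl m' (List.mem_cons_of_mem _ hm')).1] at hv
          exact (List.nodup_cons.mp hnd).1 (hv ▸ hm')
      · have hm₀l : m₀ ∈ l := by
          rcases List.mem_cons.mp hm₀ with rfl | h
          · exact absurd hx hxm
          · exact h
        rw [F_cons cs h1 φ hs,
          ih (fun m' hm' => hl m' (List.mem_cons_of_mem _ hm')) (List.nodup_cons.mp hnd).2 hm₀l]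
        refine afun_other h1 ?_ ?_
        · intro hc
          rw [cast_sub_one] at hc
          exact hxm (by linear_combination hc)
        · intro hc
          have h2 : (x - 1) % 2 = ((m : ℤ) + 1) % 2 := mod2_of_cast_eq hev (by push_cast at hc ⊢; exact hc)
          have := (hl m (List.mem_cons_self)).2
          omega

end cox


section formulas

variable {W : Type*} [Group W] {M : CoxeterMatrix (ZMod n)} (cs : CoxeterSystem M W)
variable (h1 : (1 : ZMod n) ≠ 0)
variable (φ : W →* Equiv.Perm ℤ) (hs : ∀ i, φ (cs.simple i) = aperm h1 i)
variable (hev : (2:ℤ) ∣ (n:ℤ)) (hn : 4 ≤ n)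

include hs hev hn in
lemma phi_Iprod (b : Bool) (x : ℤ) :
    φ (Iprod cs b) x = if x % 2 = (b.toNat : ℤ) then x + 1 else x - 1 := by
  haveI : NeZero n := ⟨by omega⟩
  set t := b.toNat with htdef
  have ht : t = 0 ∨ t = 1 := by cases b <;> simp [htdef]
  set l := (List.range n).filter (fun k => k % 2 = b.toNat) with hldef
  have hl : ∀ m ∈ l, m < n ∧ m % 2 = t := by
    intro m hm
    rw [hldef, List.mem_filter, List.mem_range] at hm
    exact ⟨hm.1, by simpa using hm.2⟩
  have hmem : ∀ m : ℕ, m < n → m % 2 = t → m ∈ l := by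
    intro m h1 h2
    rw [hldef, List.mem_filter, List.mem_range]
    exact ⟨h1, by simpa using h2⟩
  have hnd : l.Nodup := List.nodup_range.filter _
  have hIw : Iprod cs b = cs.wordProd (l.map Nat.cast) := rfl
  set v := (x : ZMod n).val with hv
  have hvlt : v < n := ZMod.val_lt _
  have hxv : (x : ZMod n) = ((v:ℕ) : ZMod n) := (cast_val _).symm
  have hx2 : x % 2 = ((v:ℤ)) % 2 := mod2_of_cast_eq hev (by push_cast at hxv ⊢; exact hxv)
  by_cases hpar : v % 2 = t
  · rw [hIw, F_up cs h1 φ hs hev t l hl hnd x v (hmem v hvlt hpar) hxv, if_pos (by omega)]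
  · rw [hIw, if_neg (by omega)]
    rcases Nat.eq_zero_or_pos v with hv0 | hvpos
    · have ht1 : t = 1 := by omega
      have hn2 : (n : ℤ) % 2 = 0 := by omega
      have hnn : n % 2 = 0 := by omega
      refine F_down cs h1 φ hs hev t l hl hnd x (n-1) (hmem _ (by omega) (by omega)) ?_
      have e1 : ((n - 1 : ℕ) : ZMod n) + 1 = ((n - 1 + 1 : ℕ) : ZMod n) := by push_cast; ring
      rw [e1, Nat.sub_add_cancel (by omega), ZMod.natCast_self, hxv, hv0, Nat.cast_zero]
    · refine F_down cs h1 φ hs hev t l hl hnd x (v-1) (hmem _ (by omega) (by omega)) ?_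
      have e1 : ((v - 1 : ℕ) : ZMod n) + 1 = ((v - 1 + 1 : ℕ) : ZMod n) := by push_cast; ring
      rw [e1, Nat.sub_add_cancel (by omega)]
      exact hxv

include hs hev hn in
lemma phi_alt (b : Bool) (k : ℕ) (x : ℤ) :
    φ (altProd cs b k) x
      = if (x + k) % 2 = ((b.toNat : ℤ) + 1) % 2 then x + k else x - k := by
  induction k generalizing b with
  | zero =>
      simp only [altProd, map_one, Equiv.Perm.one_apply, Nat.cast_zero]
      split_ifs <;> ring
  | succ k ih =>
      show φ (Iprod cs b * altProd cs (!b) k) x = _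
      rw [map_mul, Equiv.Perm.mul_apply, ih (!b),
        phi_Iprod cs h1 φ hs hev hn b]
      cases b <;>
        simp only [Bool.not_true, Bool.not_false, Bool.toNat_true, Bool.toNat_false] <;>
        push_cast <;>
        split_ifs <;> omega

include hs hev hn in
lemma disp_alt (b : Bool) (k : ℕ) : disp n (φ (altProd cs b k)) = (n : ℤ) * k := by
  have hterm : ∀ r ∈ Finset.range n, |φ (altProd cs b k) (r:ℤ) - (r:ℤ)| = (k:ℤ) := by
    intro r _
    rw [phi_alt cs h1 φ hs hev hn b k]
    split_ifs
    · rw [show (r:ℤ) + k - r = (k:ℤ) from by ring, abs_of_nonneg (by positivity)]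
    · rw [show (r:ℤ) - k - r = -(k:ℤ) from by ring, abs_neg, abs_of_nonneg (by positivity)]
  rw [disp, Finset.sum_congr rfl hterm, Finset.sum_const, Finset.card_range, nsmul_eq_mul]

end formulas

section lifting

lemma aperm_liftable {M : CoxeterMatrix (ZMod n)} (hM : IsAffineAMatrix n M)
    (h1 : (1 : ZMod n) ≠ 0) (h2 : (2 : ZMod n) ≠ 0) :
    M.IsLiftable (fun i => aperm h1 i) := by
  intro i j
  rw [hM i j]
  split_ifs with e1 e2
  · subst e1
    rw [pow_one, ← sq]
    exact aperm_sq h1 i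
  · rcases e2 with e2 | e2
    · subst e2
      have hb := aperm_braid h1 h2 j
      have conj : aperm h1 (j+1) * (aperm h1 j * aperm h1 (j+1)) * (aperm h1 (j+1))⁻¹
          = aperm h1 (j+1) * aperm h1 j := by group
      calc (aperm h1 (j+1) * aperm h1 j) ^ 3
          = (aperm h1 (j+1) * (aperm h1 j * aperm h1 (j+1)) * (aperm h1 (j+1))⁻¹) ^ 3 := by
            rw [conj]
        _ = aperm h1 (j+1) * (aperm h1 j * aperm h1 (j+1)) ^ 3 * (aperm h1 (j+1))⁻¹ :=
            conj_pow ..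
        _ = 1 := by rw [hb, mul_one, mul_inv_cancel]
    · subst e2
      exact aperm_braid h1 h2 i
  · push_neg at e2
    exact aperm_comm h1 e1 e2.1 e2.2

end lifting

section words

variable {W : Type*} [Group W] {M : CoxeterMatrix (ZMod n)} (cs : CoxeterSystem M W)

lemma natCast_ne_zero {m : ℕ} (hm : m < n) (h0 : 0 < m) : ((m : ℕ) : ZMod n) ≠ 0 := by
  haveI : NeZero n := ⟨by omega⟩
  intro h
  have := congrArg ZMod.val h
  rw [ZMod.val_cast_of_lt hm, ZMod.val_zero] at this
  omega

lemma one_ne_zero' (hn : 4 ≤ n) : (1 : ZMod n) ≠ 0 := by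
  have := natCast_ne_zero (n := n) (m := 1) (by omega) (by omega)
  simpa using this

lemma two_ne_zero' (hn : 4 ≤ n) : (2 : ZMod n) ≠ 0 := by
  have := natCast_ne_zero (n := n) (m := 2) (by omega) (by omega)
  simpa using this

lemma filter_parity_length (m t : ℕ) (ht : t ≤ 1) :
    ((List.range (2*m)).filter (fun k => k % 2 = t)).length = m := by
  induction m with
  | zero => simp
  | succ m ih =>
      have h2 : 2 * (m+1) = (2*m) + 1 + 1 := by ring
      rw [h2, List.range_succ, List.range_succ, List.filter_append, List.filter_append,
        List.length_append, List.length_append, ih]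
      have ha : (2 * m) % 2 = 0 := by omega
      have hb : (2 * m + 1) % 2 = 1 := by omega
      interval_cases t <;>
        simp [List.filter_singleton, ha, hb]

lemma blockW_length (hev : n % 2 = 0) (b : Bool) :
    (((List.range n).filter (fun k => k % 2 = b.toNat)).map (Nat.cast : ℕ → ZMod n)).length
      = n / 2 := by
  have h := filter_parity_length (n / 2) b.toNat (by cases b <;> simp)
  rw [show 2 * (n / 2) = n from by omega] at h
  rw [List.length_map, h]

/-- the concatenated word for the alternating product -/
def fullW (n : ℕ) : Bool → ℕ → List (ZMod n)
  | _, 0 => []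
  | b, k+1 => ((List.range n).filter (fun j => j % 2 = b.toNat)).map Nat.cast ++ fullW n (!b) k

lemma wordProd_fullW (b : Bool) (k : ℕ) :
    cs.wordProd (fullW n b k) = altProd cs b k := by
  induction k generalizing b with
  | zero => simp [fullW, altProd]
  | succ k ih => rw [fullW, cs.wordProd_append, ih]; rfl

lemma fullW_length (hev : n % 2 = 0) (b : Bool) (k : ℕ) :
    (fullW n b k).length = k * (n / 2) := by
  induction k generalizing b with
  | zero => simp [fullW]
  | succ k ih =>
      rw [fullW, List.length_append, blockW_length hev, ih]
      ring

lemma block_pairwise (hM : IsAffineAMatrix n M) (hn : 4 ≤ n) (hev : (2:ℤ) ∣ (n:ℤ)) (t : ℕ) :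
    (((List.range n).filter (fun k => k % 2 = t)).map (Nat.cast : ℕ → ZMod n)).Pairwise
      (fun a b => Commute (cs.simple a) (cs.simple b)) := by
  haveI : NeZero n := ⟨by omega⟩
  apply List.pairwise_of_forall_mem_list
  intro a ha b hb
  simp only [List.mem_map, List.mem_filter, List.mem_range] at ha hb
  obtain ⟨ma, ⟨hma_lt, hma_par⟩, rfl⟩ := ha
  obtain ⟨mb, ⟨hmb_lt, hmb_par⟩, rfl⟩ := hb
  have hma_par' : ma % 2 = t := by simpa using hma_par
  have hmb_par' : mb % 2 = t := by simpa using hmb_par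
  by_cases hab : (ma : ZMod n) = (mb : ZMod n)
  · rw [hab]
  · have hpar : ∀ mx my : ℕ, mx % 2 = t → my % 2 = t →
        ¬ ((mx : ZMod n) = (my : ZMod n) + 1) := by
      intro mx my hx hy hc
      have h2 : (mx : ℤ) % 2 = ((my : ℤ) + 1) % 2 :=
        mod2_of_cast_eq hev (by push_cast at hc ⊢; exact hc)
      omega
    have hM2 : M (ma : ZMod n) (mb : ZMod n) = 2 := by
      rw [hM]
      rw [if_neg hab, if_neg]
      rintro (hc | hc)
      · exact hpar ma mb hma_par' hmb_par' hc
      · exact hpar mb ma hmb_par' hma_par' hc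
    have hp := cs.simple_mul_simple_pow (ma : ZMod n) (mb : ZMod n)
    rw [hM2] at hp
    have h1 : cs.simple (ma : ZMod n) * cs.simple (mb : ZMod n)
        = (cs.simple (ma : ZMod n) * cs.simple (mb : ZMod n))⁻¹ :=
      eq_inv_of_mul_eq_one_left (by rw [← sq]; exact hp)
    show _ * _ = _ * _
    calc cs.simple (ma : ZMod n) * cs.simple (mb : ZMod n)
        = (cs.simple (ma : ZMod n) * cs.simple (mb : ZMod n))⁻¹ := h1
      _ = cs.simple (mb : ZMod n) * cs.simple (ma : ZMod n) := by
          rw [mul_inv_rev, cs.inv_simple, cs.inv_simple]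

lemma wordProd_perm_eq {l l' : List (ZMod n)} (hp : l.Perm l')
    (hc : l.Pairwise (fun a b => Commute (cs.simple a) (cs.simple b))) :
    cs.wordProd l = cs.wordProd l' := by
  show (l.map cs.simple).prod = (l'.map cs.simple).prod
  exact (hp.map cs.simple).prod_eq' (List.Pairwise.map cs.simple (fun a b h => h) hc)

lemma Iprod_sq (hM : IsAffineAMatrix n M) (hn : 4 ≤ n) (hev : (2:ℤ) ∣ (n:ℤ)) (b : Bool) :
    Iprod cs b * Iprod cs b = 1 := by
  have hinv : (Iprod cs b)⁻¹ = Iprod cs b := by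
    rw [Iprod, ← cs.wordProd_reverse]
    exact (wordProd_perm_eq cs (List.reverse_perm _).symm
      (block_pairwise cs hM hn hev b.toNat)).symm
  calc Iprod cs b * Iprod cs b = Iprod cs b * (Iprod cs b)⁻¹ := by rw [hinv]
    _ = 1 := mul_inv_cancel _

lemma altProd_mul_I (b : Bool) (k : ℕ) :
    altProd cs b k * Iprod cs (if Even k then b else !b) = altProd cs b (k+1) := by
  induction k generalizing b with
  | zero => show 1 * Iprod cs b = Iprod cs b * 1; rw [one_mul, mul_one]
  | succ k ih =>
      show (Iprod cs b * altProd cs (!b) k) * _ = Iprod cs b * altProd cs (!b) (k+1)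
      rcases Nat.even_or_odd k with he | ho
      · have hc : (if Even (k+1) then b else !b) = !b := by
          simp [Nat.even_add_one, he]
        rw [hc, mul_assoc]
        have h2 := ih (!b); rw [if_pos he] at h2; rw [h2]
      · have hk' : ¬ Even k := Nat.not_even_iff_odd.mpr ho
        have hc : (if Even (k+1) then b else !b) = b := by
          simp [Nat.even_add_one, hk']
        rw [hc, mul_assoc]
        have h2 := ih (!b); rw [if_neg hk', Bool.not_not] at h2; rw [h2]

lemma altProd_inv (hM : IsAffineAMatrix n M) (hn : 4 ≤ n) (hev : (2:ℤ) ∣ (n:ℤ))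
    (b : Bool) (k : ℕ) :
    (altProd cs b k)⁻¹ = altProd cs (if Even k then !b else b) k := by
  induction k generalizing b with
  | zero => show (1 : W)⁻¹ = 1; simp
  | succ k ih =>
      show (Iprod cs b * altProd cs (!b) k)⁻¹ = _
      rcases Nat.even_or_odd k with he | ho
      · rw [if_neg (by simp [Nat.even_add_one, he])]
        rw [mul_inv_rev, ih (!b), if_pos he, Bool.not_not,
          inv_eq_of_mul_eq_one_right (Iprod_sq cs hM hn hev b)]
        have h2 := altProd_mul_I cs b k; rw [if_pos he] at h2; exact h2
      · have hk' : ¬ Even k := Nat.not_even_iff_odd.mpr ho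
        rw [if_pos (by simp [Nat.even_add_one, hk'])]
        rw [mul_inv_rev, ih (!b), if_neg hk',
          inv_eq_of_mul_eq_one_right (Iprod_sq cs hM hn hev b)]
        have h2 := altProd_mul_I cs (!b) k
        rw [if_neg hk', Bool.not_not] at h2; exact h2

lemma mem_parityGenSet (hn : 4 ≤ n) {i : ZMod n} {b : Bool} :
    i ∈ parityGenSet n b ↔ i.val % 2 = b.toNat := by
  haveI : NeZero n := ⟨by omega⟩
  constructor
  · rintro ⟨k, hk, hpar, rfl⟩
    rw [ZMod.val_cast_of_lt hk]; exact hpar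
  · intro h
    exact ⟨i.val, ZMod.val_lt i, h, cast_val i⟩

end words

section descent

variable {W : Type*} [Group W] {M : CoxeterMatrix (ZMod n)} (cs : CoxeterSystem M W)
variable (h1 : (1 : ZMod n) ≠ 0)
variable (φ : W →* Equiv.Perm ℤ) (hs : ∀ i, φ (cs.simple i) = aperm h1 i)
variable (hev : (2:ℤ) ∣ (n:ℤ)) (hn : 4 ≤ n)

include hs hev hn in
lemma disp_aperm_alt (b : Bool) (k : ℕ) (i : ZMod n) (hi : i.val % 2 = (!b).toNat) :
    disp n (aperm h1 i * φ (altProd cs b k)) = (n : ℤ) * k + 2 := by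
  haveI : NeZero n := ⟨by omega⟩
  set A := φ (altProd cs b k) with hA
  set t : ℕ := b.toNat with ht
  have htn : i.val % 2 = 1 - t ∧ t ≤ 1 := by
    cases b <;> simp_all [ht]
  have hicast : ((i.val : ℕ) : ZMod n) = i := cast_val i
  have hAr : ∀ r : ℕ, A (r:ℤ) = if ((r:ℤ) + k) % 2 = ((t:ℤ) + 1) % 2
      then (r:ℤ) + k else (r:ℤ) - k := fun r => phi_alt cs h1 φ hs hev hn b k r
  -- parity of values of A
  have hmodA : ∀ r : ℕ, ∀ z : ℤ, (A (r:ℤ) : ZMod n) = ((z : ℤ) : ZMod n) →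
      (A (r:ℤ)) % 2 = z % 2 := fun r z h => mod2_of_cast_eq hev h
  have key1 : ∀ r : ℕ, (A (r:ℤ) : ZMod n) = i →
      A (r:ℤ) = (r:ℤ) + k := by
    intro r hc
    have hp : (A (r:ℤ)) % 2 = (i.val : ℤ) % 2 := by
      apply hmodA r (i.val : ℤ)
      rw [hc]; push_cast; rw [hicast]
    rw [hAr r]
    rw [hAr r] at hp
    split_ifs with hcond
    · rfl
    · exfalso
      rw [if_neg hcond] at hp
      omega
  have key2 : ∀ r : ℕ, (A (r:ℤ) : ZMod n) = i + 1 →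
      A (r:ℤ) = (r:ℤ) - k := by
    intro r hc
    have hp : (A (r:ℤ)) % 2 = ((i.val : ℤ) + 1) % 2 := by
      apply hmodA r ((i.val : ℤ) + 1)
      rw [hc]; push_cast; rw [hicast]
    rw [hAr r]
    rw [hAr r] at hp
    split_ifs with hcond
    · exfalso
      rw [if_pos hcond] at hp
      omega
    · rfl
  have hne : i + 1 ≠ i := fun hc => h1 (by linear_combination hc)
  have hpoint : ∀ r ∈ Finset.range n, |(aperm h1 i * A) (r:ℤ) - (r:ℤ)| =
      (k:ℤ) + (if (A (r:ℤ) : ZMod n) = i then (1:ℤ) else 0)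
        + (if (A (r:ℤ) : ZMod n) = i + 1 then (1:ℤ) else 0) := by
    intro r _
    rw [Equiv.Perm.mul_apply, aperm_apply]
    by_cases hc1 : (A (r:ℤ) : ZMod n) = i
    · have hval := key1 r hc1
      rw [afun_self h1 hc1, if_pos hc1,
        if_neg (fun hcc => hne (hcc.symm.trans hc1)), hval,
        show (r:ℤ) + k + 1 - r = (k:ℤ) + 1 from by ring,
        abs_of_nonneg (by positivity)]
      ring
    · by_cases hc2 : (A (r:ℤ) : ZMod n) = i + 1
      · have hval := key2 r hc2
        rw [afun_next h1 hc2, if_neg hc1, if_pos hc2, hval,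
          show (r:ℤ) - k - 1 - r = -((k:ℤ) + 1) from by ring, abs_neg,
          abs_of_nonneg (by positivity)]
        ring
      · rw [afun_other h1 hc1 hc2, if_neg hc1, if_neg hc2, hAr r]
        split_ifs
        · rw [show (r:ℤ) + k - r = (k:ℤ) from by ring, abs_of_nonneg (by positivity)]; ring
        · rw [show (r:ℤ) - k - r = -(k:ℤ) from by ring, abs_neg,
            abs_of_nonneg (by positivity)]; ring
  have hper : IsPer n A := isPer_phi cs h1 φ hs _
  have hcard : ∀ c : ZMod n, (∃ r0 : ℕ, r0 < n ∧ (A (r0:ℤ) : ZMod n) = c) →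
      ((Finset.range n).filter (fun r : ℕ => ((A (r:ℤ) : ZMod n)) = c)).card = 1 := by
    rintro c ⟨r0, hr0, hc⟩
    refine le_antisymm (card_res_le hper c) ?_
    exact Finset.card_pos.mpr ⟨r0, Finset.mem_filter.mpr ⟨Finset.mem_range.mpr hr0, hc⟩⟩
  -- membership for class i
  have hmem1 : ∃ r0 : ℕ, r0 < n ∧ (A (r0:ℤ) : ZMod n) = i := by
    refine ⟨(i - (k : ZMod n)).val, ZMod.val_lt _, ?_⟩
    have hcast : (((i - (k:ZMod n)).val : ℕ) : ZMod n) = i - k := cast_val _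
    set r0 := (i - (k : ZMod n)).val with hr0
    have hc2 : (((r0:ℤ) + k : ℤ) : ZMod n) = ((i.val : ℤ) : ZMod n) := by
      push_cast
      rw [hcast, hicast]; ring
    have hp : ((r0:ℤ) + k) % 2 = (i.val : ℤ) % 2 := mod2_of_cast_eq hev hc2
    have hcond : ((r0:ℤ) + k) % 2 = ((t:ℤ) + 1) % 2 := by omega
    rw [hAr r0, if_pos hcond]
    have : (((r0:ℤ) + k : ℤ) : ZMod n) = i := by
      rw [hc2]; push_cast; rw [hicast]
    exact this
  have hmem2 : ∃ r0 : ℕ, r0 < n ∧ (A (r0:ℤ) : ZMod n) = i + 1 := by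
    refine ⟨(i + 1 + (k : ZMod n)).val, ZMod.val_lt _, ?_⟩
    have hcast : (((i + 1 + (k:ZMod n)).val : ℕ) : ZMod n) = i + 1 + k := cast_val _
    set r0 := (i + 1 + (k : ZMod n)).val with hr0
    have hc2 : (((r0:ℤ) - k : ℤ) : ZMod n) = (((i.val : ℤ) + 1 : ℤ) : ZMod n) := by
      push_cast
      rw [hcast, hicast]; ring
    have hp : ((r0:ℤ) - k) % 2 = ((i.val : ℤ) + 1) % 2 := mod2_of_cast_eq hev hc2
    have hcond : ¬ (((r0:ℤ) + k) % 2 = ((t:ℤ) + 1) % 2) := by omega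
    rw [hAr r0, if_neg hcond]
    have : (((r0:ℤ) - k : ℤ) : ZMod n) = i + 1 := by
      rw [hc2]; push_cast; rw [hicast]
    exact this
  calc disp n (aperm h1 i * A)
      = ∑ r ∈ Finset.range n, ((k:ℤ)
          + (if (A (r:ℤ) : ZMod n) = i then (1:ℤ) else 0)
          + (if (A (r:ℤ) : ZMod n) = i + 1 then (1:ℤ) else 0)) :=
        Finset.sum_congr rfl hpoint
    _ = (∑ _r ∈ Finset.range n, (k:ℤ))
          + (∑ r ∈ Finset.range n, (if (A (r:ℤ) : ZMod n) = i then (1:ℤ) else 0))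
          + (∑ r ∈ Finset.range n, (if (A (r:ℤ) : ZMod n) = i + 1 then (1:ℤ) else 0)) := by
        rw [← Finset.sum_add_distrib, ← Finset.sum_add_distrib]
    _ = (n : ℤ) * k + 1 + 1 := by
        rw [Finset.sum_const, Finset.card_range, nsmul_eq_mul, Finset.sum_boole,
          Finset.sum_boole, hcard i hmem1, hcard (i+1) hmem2]
        norm_num
    _ = (n : ℤ) * k + 2 := by ring

end descent

section final

variable {W : Type*} [Group W] {M : CoxeterMatrix (ZMod n)} (cs : CoxeterSystem M W)

lemma alt_length (hM : IsAffineAMatrix n M) (hn : 4 ≤ n) (hevn : n % 2 = 0)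
    (b : Bool) (k : ℕ) :
    cs.length (altProd cs b k) = k * (n / 2) := by
  haveI : NeZero n := ⟨by omega⟩
  have h1 := one_ne_zero' (n := n) hn
  have h2 := two_ne_zero' (n := n) hn
  have hev : (2:ℤ) ∣ (n:ℤ) := ⟨((n/2 : ℕ) : ℤ), by push_cast; omega⟩
  set φ := (cs.lift ⟨fun i => aperm h1 i, aperm_liftable hM h1 h2⟩) with hφ
  have hs : ∀ i, φ (cs.simple i) = aperm h1 i := fun i => cs.lift_apply_simple _ i
  apply le_antisymm
  · calc cs.length (altProd cs b k) = cs.length (cs.wordProd (fullW n b k)) := by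
          rw [wordProd_fullW]
      _ ≤ (fullW n b k).length := cs.length_wordProd_le _
      _ = k * (n/2) := fullW_length hevn b k
  · have hd := disp_alt cs h1 φ hs hev hn b k
    have hl := disp_le_len cs h1 φ hs (altProd cs b k)
    rw [hd] at hl
    set m := n / 2 with hm
    have e : (n:ℤ) = 2 * (m : ℤ) := by omega
    rw [e] at hl
    have h3 : ((k * m : ℕ) : ℤ) ≤ (cs.length (altProd cs b k) : ℤ) := by
      push_cast
      nlinarith [hl]
    exact_mod_cast h3

lemma alt_leftDescents (hM : IsAffineAMatrix n M) (hn : 4 ≤ n) (hevn : n % 2 = 0)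
    (b : Bool) (k : ℕ) (hk : 1 ≤ k) :
    {i : ZMod n | cs.IsLeftDescent (altProd cs b k) i} = parityGenSet n b := by
  haveI : NeZero n := ⟨by omega⟩
  have h1 := one_ne_zero' (n := n) hn
  have h2 := two_ne_zero' (n := n) hn
  have hev : (2:ℤ) ∣ (n:ℤ) := ⟨((n/2 : ℕ) : ℤ), by push_cast; omega⟩
  set φ := (cs.lift ⟨fun i => aperm h1 i, aperm_liftable hM h1 h2⟩) with hφ
  have hs : ∀ i, φ (cs.simple i) = aperm h1 i := fun i => cs.lift_apply_simple _ i
  ext i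
  simp only [Set.mem_setOf_eq]
  rw [mem_parityGenSet hn]
  constructor
  · intro hdesc
    by_contra hpar
    have hi : i.val % 2 = (!b).toNat := by
      cases b <;> simp_all <;> omega
    have hdisp := disp_aperm_alt cs h1 φ hs hev hn b k i hi
    have hlen := disp_le_len cs h1 φ hs (cs.simple i * altProd cs b k)
    rw [map_mul, hs, hdisp] at hlen
    have hw := alt_length cs hM hn hevn b k
    have hlt : cs.length (cs.simple i * altProd cs b k) < k * (n/2) := by
      rw [← hw]; exact hdesc
    set m := n / 2 with hm
    have e : (n:ℤ) = 2 * (m : ℤ) := by omega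
    rw [e] at hlen
    have hcast : ((cs.length (cs.simple i * altProd cs b k) : ℕ) : ℤ)
        < ((k * m : ℕ) : ℤ) := by exact_mod_cast hlt
    push_cast at hcast
    nlinarith [hlen, hcast]
  · intro hpar
    obtain ⟨k', rfl⟩ : ∃ k', k = k' + 1 := ⟨k - 1, by omega⟩
    set blockL := ((List.range n).filter (fun j => j % 2 = b.toNat)).map
      (Nat.cast : ℕ → ZMod n) with hbl
    have himem : i ∈ blockL := by
      rw [hbl]
      exact List.mem_map.mpr ⟨i.val, List.mem_filter.mpr
        ⟨List.mem_range.mpr (ZMod.val_lt i), by simpa using hpar⟩, cast_val i⟩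
    have hIb : Iprod cs b = cs.simple i * cs.wordProd (blockL.erase i) := by
      calc Iprod cs b = cs.wordProd blockL := rfl
        _ = cs.wordProd (i :: blockL.erase i) :=
            wordProd_perm_eq cs (List.perm_cons_erase himem)
              (block_pairwise cs hM hn hev b.toNat)
        _ = cs.simple i * cs.wordProd (blockL.erase i) := cs.wordProd_cons _ _
    have hsw : cs.simple i * altProd cs b (k'+1)
        = cs.wordProd (blockL.erase i ++ fullW n (!b) k') := by
      show cs.simple i * (Iprod cs b * altProd cs (!b) k') = _
      rw [hIb]
      calc cs.simple i * ((cs.simple i * cs.wordProd (blockL.erase i)) * altProd cs (!b) k')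
          = (cs.simple i * cs.simple i)
              * (cs.wordProd (blockL.erase i) * altProd cs (!b) k') := by group
        _ = cs.wordProd (blockL.erase i) * altProd cs (!b) k' := by
            rw [cs.simple_mul_simple_self, one_mul]
        _ = cs.wordProd (blockL.erase i ++ fullW n (!b) k') := by
            rw [cs.wordProd_append, wordProd_fullW]
    show cs.length (cs.simple i * altProd cs b (k'+1)) < cs.length (altProd cs b (k'+1))
    rw [hsw, alt_length cs hM hn hevn b (k'+1)]
    have hblen : blockL.length = n / 2 := by rw [hbl]; exact blockW_length hevn b
    calc cs.length (cs.wordProd (blockL.erase i ++ fullW n (!b) k'))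
        ≤ (blockL.erase i ++ fullW n (!b) k').length := cs.length_wordProd_le _
      _ = (n/2 - 1) + k' * (n/2) := by
          rw [List.length_append, List.length_erase_of_mem himem, fullW_length hevn, hblen]
      _ < (k'+1) * (n/2) := by
          rw [Nat.succ_mul, Nat.add_comm (n/2 - 1)]
          exact Nat.add_lt_add_left (Nat.sub_lt (by omega) one_pos) _

lemma alt_rightDescents (hM : IsAffineAMatrix n M) (hn : 4 ≤ n) (hevn : n % 2 = 0)
    (b : Bool) (k : ℕ) (hk : 1 ≤ k) :
    {i : ZMod n | cs.IsRightDescent (altProd cs b k) i}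
      = parityGenSet n (if Even k then !b else b) := by
  have hev : (2:ℤ) ∣ (n:ℤ) := ⟨((n/2 : ℕ) : ℤ), by push_cast; omega⟩
  have hset : {i : ZMod n | cs.IsRightDescent (altProd cs b k) i}
      = {i : ZMod n | cs.IsLeftDescent ((altProd cs b k)⁻¹) i} := by
    ext i
    simp only [Set.mem_setOf_eq, cs.isLeftDescent_inv_iff]
  rw [hset, altProd_inv cs hM hn hev b k,
    alt_leftDescents cs hM hn hevn (if Even k then !b else b) k hk]

end final

end AffA

/-- In type affine `A_{n-1}` with `n` even, the alternating product of `I₀` and `I₁`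
with `k ≥ 1` factors starting with `I_b` has length `k·(n/2)`, its left descent set is
`S_b` (determined by the first factor), and its right descent set is determined by the
last factor. -/

theorem altProd_length_and_descents
    {n : ℕ} (hn : 4 ≤ n) (hev : Even n) {W : Type*} {M : CoxeterMatrix (ZMod n)} [Group W]
    (hM : IsAffineAMatrix n M) (cs : CoxeterSystem M W) (b : Bool) (k : ℕ) (hk : 1 ≤ k) :
    cs.length (altProd cs b k) = k * (n / 2) ∧
    {i : ZMod n | cs.IsLeftDescent (altProd cs b k) i} = parityGenSet n b ∧
    {i : ZMod n | cs.IsRightDescent (altProd cs b k) i} =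
      parityGenSet n (if Even k then !b else b) := by
  have hevn : n % 2 = 0 := Nat.even_iff.mp hev
  exact ⟨AffA.alt_length cs hM hn hevn b k,
    AffA.alt_leftDescents cs hM hn hevn b k hk,
    AffA.alt_rightDescents cs hM hn hevn b k hk⟩
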